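/- Set p = d/2 + 1 and M_n = ⌈n^{1/(2p+d)}⌉, partition [0,1]^d into M_n^d cubes {A_{n,j}} of side length 1/M_n with centers {a_{n,j}}, and let g : ℝ^d → ℝ be a function supported in (−1/2,1/2)^d with ∫g²(x)dx > 0 whose Fourier transform satisfies |F̂_g(ω)| ≤ c₉₂/(‖ω‖^{d+1}·(log‖ω‖)²) for all ω with ‖ω‖ ≥ 2. For c_n = (c_{n,1},…,c_{n,M_n^d}) ∈ {−1,1}^{M_n^d} define m^{(c_n)}(x) = Σ_{j=1}^{M_n^d} c_{n,j}·(log n)^{−3}·M_n^{−p}·g(M_n·(x − a_{n,j})). If c_n satisfies |Σ_{j=1}^{M_n^d} c_{n,j}·e^{iω^T a_{n,j}}| ≤ (log n)·M_n^{d/2} for all ω ∈ ℝ^d, then the Fourier transform of m^{(c_n)} satisfies |F̂_{m^{(c_n)}}(ω)| ≤ c₁/(‖ω‖^{d+1}·(log‖ω‖)²) for all ω ∈ ℝ^d with ‖ω‖ ≥ 2, for a constant c₁ > 0 not depending on n or c_n. -/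

import Mathlib

open MeasureTheory

noncomputable section

abbrev Evec (d : ℕ) := EuclideanSpace ℝ (Fin d)

/-- The Fourier transform `F̂(ω) = (2π)^{−d/2} ∫ e^{−i⟨ω,x⟩} m(x) dx`. -/
def fourierT (d : ℕ) (m : Evec d → ℝ) (ω : Evec d) : ℂ :=
  ((2 * Real.pi : ℝ) ^ (-(d : ℝ) / 2) : ℝ) *
    ∫ x : Evec d, Complex.exp (-(Complex.I * ((inner ℝ ω x : ℝ) : ℂ))) * (m x : ℂ)

/-- The smoothness exponent `p = d/2 + 1`. -/
def pexp (d : ℕ) : ℝ := (d : ℝ) / 2 + 1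

/-- `M_n = ⌈n^{1/(2p+d)}⌉`. -/
def MnD (d n : ℕ) : ℕ := ⌈(n : ℝ) ^ ((1 : ℝ) / (2 * pexp d + d))⌉₊

/-- The centers `a_{n,j}` of the cubes of the partition of `[0,1]^d` into `M_n^d` cubes of
side length `1/M_n`, indexed by `v : Fin d → Fin M_n`. -/
def cubeCenter (d n : ℕ) (v : Fin d → Fin (MnD d n)) : Evec d :=
  WithLp.toLp 2 (fun i => 1 / (2 * (MnD d n : ℝ)) + (v i : ℝ) / (MnD d n : ℝ))

/-- The function `m^{(c)}(x) = Σ_j c_j (log n)^{−3} M_n^{−p} g(M_n (x − a_{n,j}))`. -/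
def mcn (d n : ℕ) (g : Evec d → ℝ) (c : (Fin d → Fin (MnD d n)) → ℝ) (x : Evec d) : ℝ :=
  ∑ v : Fin d → Fin (MnD d n),
    c v * ((Real.log n) ^ 3)⁻¹ * ((MnD d n : ℝ) ^ (pexp d))⁻¹ *
      g ((MnD d n : ℝ) • (x - cubeCenter d n v))



lemma expCont (d : ℕ) (ω : Evec d) :
    Continuous (fun x : Evec d => Complex.exp (-(Complex.I * ((inner ℝ ω x : ℝ) : ℂ)))) :=
  Complex.continuous_exp.comp ((continuous_const.mul (Complex.continuous_ofReal.comp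
    (continuous_const.inner continuous_id))).neg)

lemma expCont' (d : ℕ) (ω : Evec d) :
    Continuous (fun x : Evec d => Complex.exp (Complex.I * ((inner ℝ ω x : ℝ) : ℂ))) :=
  Complex.continuous_exp.comp (continuous_const.mul (Complex.continuous_ofReal.comp
    (continuous_const.inner continuous_id)))

lemma expNorm (t : ℝ) : ‖Complex.exp (-(Complex.I * (t : ℂ)))‖ = 1 := by
  rw [Complex.norm_exp]; simp [Complex.mul_re]

lemma expNorm' (t : ℝ) : ‖Complex.exp (Complex.I * (t : ℂ))‖ = 1 := by
  rw [Complex.norm_exp]; simp [Complex.mul_re]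

lemma term_integral (d n : ℕ) (hM : (0:ℝ) < (MnD d n : ℝ)) (g : Evec d → ℝ)
    (ω : Evec d) (a : Evec d) :
    (∫ x : Evec d, Complex.exp (-(Complex.I * ((inner ℝ ω x : ℝ) : ℂ))) *
        (g ((MnD d n : ℝ) • (x - a)) : ℂ))
      = (((MnD d n : ℝ) ^ d)⁻¹ : ℝ) * Complex.exp (-(Complex.I * ((inner ℝ ω a : ℝ) : ℂ))) *
        ∫ x : Evec d, Complex.exp (-(Complex.I * ((inner ℝ (((MnD d n : ℝ))⁻¹ • ω) x : ℝ) : ℂ))) *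
          (g x : ℂ) := by
  set M : ℝ := (MnD d n : ℝ) with hMdef
  have hMne : M ≠ 0 := hM.ne'
  have t1 : (∫ x : Evec d, Complex.exp (-(Complex.I * ((inner ℝ ω x : ℝ) : ℂ))) *
        (g (M • (x - a)) : ℂ))
      = ∫ x : Evec d, Complex.exp (-(Complex.I * ((inner ℝ ω (x + a) : ℝ) : ℂ))) *
        (g (M • x) : ℂ) := by
    rw [← integral_add_right_eq_self
      (fun x : Evec d => Complex.exp (-(Complex.I * ((inner ℝ ω x : ℝ) : ℂ))) * (g (M • (x - a)) : ℂ)) a]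
    simp [add_sub_cancel_right]
  rw [t1]
  have t2 : ∀ x : Evec d, Complex.exp (-(Complex.I * ((inner ℝ ω (x + a) : ℝ) : ℂ)))
      = Complex.exp (-(Complex.I * ((inner ℝ ω a : ℝ) : ℂ))) *
        Complex.exp (-(Complex.I * ((inner ℝ ω x : ℝ) : ℂ))) := by
    intro x
    rw [inner_add_right (𝕜 := ℝ), ← Complex.exp_add]
    push_cast
    ring_nf
  simp_rw [t2, mul_assoc]
  rw [integral_const_mul]
  have t3 : ∀ x : Evec d, Complex.exp (-(Complex.I * ((inner ℝ ω x : ℝ) : ℂ))) * (g (M • x) : ℂ)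
      = (fun y : Evec d =>
          Complex.exp (-(Complex.I * ((inner ℝ (M⁻¹ • ω) y : ℝ) : ℂ))) * (g y : ℂ)) (M • x) := by
    intro x
    simp only [real_inner_smul_left, real_inner_smul_right]
    rw [mul_inv_cancel_left₀ hMne]
  simp_rw [t3]
  rw [MeasureTheory.Measure.integral_comp_smul volume
    (fun y : Evec d => Complex.exp (-(Complex.I * ((inner ℝ (M⁻¹ • ω) y : ℝ) : ℂ))) * (g y : ℂ)) M]
  rw [finrank_euclideanSpace_fin]
  rw [abs_of_nonneg (inv_nonneg.2 (pow_nonneg hM.le _))]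
  rw [Complex.real_smul]
  push_cast
  ring

lemma term_integrable (d n : ℕ) (hM : (0:ℝ) < (MnD d n : ℝ)) (g : Evec d → ℝ)
    (hg : Integrable g) (ω : Evec d) (r : ℝ) (a : Evec d) :
    Integrable (fun x : Evec d => Complex.exp (-(Complex.I * ((inner ℝ ω x : ℝ) : ℂ))) *
      ((r * g ((MnD d n : ℝ) • (x - a)) : ℝ) : ℂ)) := by
  have h1 : Integrable (fun x : Evec d => g ((MnD d n : ℝ) • (x - a))) :=
    (hg.comp_smul hM.ne').comp_sub_right a
  have h2 := (h1.ofReal (𝕜 := ℂ)).const_mul (r : ℂ)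
  have h3 := h2.bdd_mul ((expCont d ω).aestronglyMeasurable)
    (c := 1) (Filter.Eventually.of_forall fun x => le_of_eq (expNorm _))
  refine h3.congr (Filter.Eventually.of_forall fun x => ?_)
  simp [Complex.ofReal_mul]

lemma fourier_mcn (d n : ℕ) (hM : (0:ℝ) < (MnD d n : ℝ)) (g : Evec d → ℝ)
    (hg : Integrable g) (c : (Fin d → Fin (MnD d n)) → ℝ) (ω : Evec d) :
    fourierT d (mcn d n g c) ω =
      ((((Real.log n) ^ 3)⁻¹ * ((MnD d n : ℝ) ^ (pexp d))⁻¹ * (((MnD d n : ℝ)) ^ d)⁻¹ : ℝ) : ℂ) *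
        (∑ v : Fin d → Fin (MnD d n), (c v : ℂ) *
            Complex.exp (-(Complex.I * ((inner ℝ ω (cubeCenter d n v) : ℝ) : ℂ)))) *
        fourierT d g (((MnD d n : ℝ))⁻¹ • ω) := by
  set M : ℝ := (MnD d n : ℝ) with hMdef
  set L : ℝ := ((Real.log n) ^ 3)⁻¹ with hL
  set P : ℝ := (M ^ (pexp d))⁻¹ with hP
  have hsum : ∀ x : Evec d,
      Complex.exp (-(Complex.I * ((inner ℝ ω x : ℝ) : ℂ))) * ((mcn d n g c x : ℝ) : ℂ)
      = ∑ v : Fin d → Fin (MnD d n),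
          Complex.exp (-(Complex.I * ((inner ℝ ω x : ℝ) : ℂ))) *
            ((c v * L * P * g (M • (x - cubeCenter d n v)) : ℝ) : ℂ) := by
    intro x
    rw [mcn, Complex.ofReal_sum, Finset.mul_sum]
  have hint : ∀ v ∈ Finset.univ, Integrable (fun x : Evec d =>
      Complex.exp (-(Complex.I * ((inner ℝ ω x : ℝ) : ℂ))) *
        ((c v * L * P * g (M • (x - cubeCenter d n v)) : ℝ) : ℂ)) :=
    fun v _ => term_integrable d n hM g hg ω _ _
  rw [fourierT]
  calc ((2 * Real.pi : ℝ) ^ (-(d : ℝ) / 2) : ℝ) *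
        (∫ x : Evec d, Complex.exp (-(Complex.I * ((inner ℝ ω x : ℝ) : ℂ))) * ((mcn d n g c x : ℝ) : ℂ)) =
      ((2 * Real.pi : ℝ) ^ (-(d : ℝ) / 2) : ℝ) *
        ∑ v : Fin d → Fin (MnD d n), ∫ x : Evec d,
          Complex.exp (-(Complex.I * ((inner ℝ ω x : ℝ) : ℂ))) *
            ((c v * L * P * g (M • (x - cubeCenter d n v)) : ℝ) : ℂ) := by
        rw [← integral_finset_sum _ hint]
        congr 1
        exact integral_congr_ae (Filter.Eventually.of_forall hsum)
    _ = _ := by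
        have hterm : ∀ v : Fin d → Fin (MnD d n), (∫ x : Evec d,
            Complex.exp (-(Complex.I * ((inner ℝ ω x : ℝ) : ℂ))) *
              ((c v * L * P * g (M • (x - cubeCenter d n v)) : ℝ) : ℂ))
            = ((c v * L * P : ℝ) : ℂ) * ((((M : ℝ)) ^ d)⁻¹ : ℝ) *
              Complex.exp (-(Complex.I * ((inner ℝ ω (cubeCenter d n v) : ℝ) : ℂ))) *
              ∫ x : Evec d, Complex.exp (-(Complex.I * ((inner ℝ (M⁻¹ • ω) x : ℝ) : ℂ))) * (g x : ℂ) := by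
          intro v
          have e0 : ∀ x : Evec d, Complex.exp (-(Complex.I * ((inner ℝ ω x : ℝ) : ℂ))) *
              ((c v * L * P * g (M • (x - cubeCenter d n v)) : ℝ) : ℂ)
              = ((c v * L * P : ℝ) : ℂ) * (Complex.exp (-(Complex.I * ((inner ℝ ω x : ℝ) : ℂ))) *
                  (g (M • (x - cubeCenter d n v)) : ℂ)) := by
            intro x
            rw [Complex.ofReal_mul]
            ring
          simp_rw [e0]
          rw [integral_const_mul, term_integral d n hM g ω (cubeCenter d n v)]
          ring
        simp_rw [hterm]
        rw [fourierT]
        rw [← Finset.sum_mul]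
        have key : ∀ v : Fin d → Fin (MnD d n), ((c v * L * P : ℝ) : ℂ) * ((((M : ℝ)) ^ d)⁻¹ : ℝ) *
            Complex.exp (-(Complex.I * ((inner ℝ ω (cubeCenter d n v) : ℝ) : ℂ)))
            = ((L * P * ((M : ℝ) ^ d)⁻¹ : ℝ) : ℂ) *
              ((c v : ℂ) * Complex.exp (-(Complex.I * ((inner ℝ ω (cubeCenter d n v) : ℝ) : ℂ)))) := by
          intro v
          simp only [Complex.ofReal_mul]
          ring
        simp_rw [key]
        rw [← Finset.mul_sum]
        ring

lemma fourier_abs_le (d : ℕ) (g : Evec d → ℝ) (u : Evec d) :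
    ‖(fourierT d g u)‖ ≤
      (2 * Real.pi) ^ (-(d : ℝ) / 2) * ∫ x : Evec d, |g x| := by
  rw [fourierT, norm_mul, Complex.norm_real, Real.norm_eq_abs,
    abs_of_nonneg (Real.rpow_nonneg (by positivity) _)]
  refine mul_le_mul_of_nonneg_left ?_ (Real.rpow_nonneg (by positivity) _)
  calc ‖(∫ x : Evec d, Complex.exp (-(Complex.I * ((inner ℝ u x : ℝ) : ℂ))) * (g x : ℂ))‖
      = ‖∫ x : Evec d, Complex.exp (-(Complex.I * ((inner ℝ u x : ℝ) : ℂ))) * (g x : ℂ)‖ :=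
        rfl
    _ ≤ ∫ x : Evec d, ‖Complex.exp (-(Complex.I * ((inner ℝ u x : ℝ) : ℂ))) * (g x : ℂ)‖ :=
        norm_integral_le_integral_norm _
    _ = ∫ x : Evec d, |g x| := by
        refine integral_congr_ae (Filter.Eventually.of_forall fun x => ?_)
        simp only [norm_mul, expNorm, Complex.norm_real, Real.norm_eq_abs, one_mul]

lemma mcn_not_integrable (d n : ℕ) (hd : 0 < d) (hn : 2 ≤ n) (hMpos : 0 < MnD d n)
    (g : Evec d → ℝ)
    (hgsupp : ∀ x : Evec d, g x ≠ 0 → ∀ i, x i ∈ Set.Ioo (-(1 / 2) : ℝ) (1 / 2))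
    (hg : ¬ Integrable g) (c : (Fin d → Fin (MnD d n)) → ℝ)
    (hc : ∀ v, c v = 1 ∨ c v = -1) (ω : Evec d) :
    ¬ Integrable (fun x : Evec d =>
      Complex.exp (-(Complex.I * ((inner ℝ ω x : ℝ) : ℂ))) * (mcn d n g c x : ℂ)) := by
  intro h
  set M : ℝ := (MnD d n : ℝ) with hMdef
  have hM0 : (0:ℝ) < M := by rw [hMdef]; exact_mod_cast hMpos
  have hlogn : 0 < Real.log n := Real.log_pos (by exact_mod_cast hn)
  set L : ℝ := ((Real.log n) ^ 3)⁻¹ with hL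
  set P : ℝ := (M ^ (pexp d))⁻¹ with hP
  have hLne : L ≠ 0 := by
    rw [hL]; positivity
  have hPne : P ≠ 0 := by
    rw [hP]
    exact (inv_pos.2 (Real.rpow_pos_of_pos hM0 _)).ne'
  -- mcn is integrable
  have h1 : Integrable (fun x : Evec d => (mcn d n g c x : ℂ)) := by
    have h1' := h.bdd_mul ((expCont' d ω).aestronglyMeasurable)
      (c := 1) (Filter.Eventually.of_forall fun x => le_of_eq (expNorm' _))
    refine h1'.congr (Filter.Eventually.of_forall fun x => ?_)
    simp [← mul_assoc, ← Complex.exp_add]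
  have h2 : Integrable (mcn d n g c) := by
    have := h1.re
    simpa using this
  set v0 : Fin d → Fin (MnD d n) := fun _ => ⟨0, hMpos⟩ with hv0
  set a : Evec d := cubeCenter d n v0 with ha
  set U : Set (Evec d) := {x : Evec d | ∀ i, |x i - a i| < 1 / (2 * M)} with hU
  have hUopen : IsOpen U := by
    have : U = ⋂ i, {x : Evec d | |x i - a i| < 1 / (2 * M)} := by
      ext x; simp [hU, Set.mem_iInter]
    rw [this]
    refine isOpen_iInter_of_finite fun i => ?_
    have hcont : Continuous fun x : Evec d => |x i - a i| := by fun_prop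
    exact isOpen_lt hcont continuous_const
  have hhalf : M * (1 / (2 * M)) = 1 / 2 := by field_simp
  have hsupp : ∀ (v : Fin d → Fin (MnD d n)) (x : Evec d),
      g (M • (x - cubeCenter d n v)) ≠ 0 →
        ∀ i, |x i - cubeCenter d n v i| < 1 / (2 * M) := by
    intro v x hx i
    have h5 := hgsupp _ hx i
    have hcoord : (M • (x - cubeCenter d n v)) i = M * (x i - cubeCenter d n v i) := by
      simp [PiLp.smul_apply, PiLp.sub_apply]
    rw [hcoord] at h5
    obtain ⟨hlo, hhi⟩ := h5
    rw [abs_lt]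
    constructor <;> nlinarith [hhalf, hM0]
  -- on U, mcn equals the single v0 term
  have hmcnU : ∀ x ∈ U, mcn d n g c x = c v0 * L * P * g (M • (x - a)) := by
    intro x hx
    rw [mcn]
    refine Fintype.sum_eq_single v0 ?_
    intro v hv
    have hgv : g (M • (x - cubeCenter d n v)) = 0 := by
      by_contra hgv
      obtain ⟨i, hi⟩ : ∃ i, v i ≠ v0 i := by
        by_contra h'
        push_neg at h'
        exact hv (funext h')
      have h6 := hsupp v x hgv i
      have h7 := hx i
      have hav : cubeCenter d n v i - a i = ((v i : ℕ) : ℝ) / M := by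
        simp only [ha, cubeCenter, hv0]
        norm_num
        rw [hMdef]
      have hv1 : (1:ℝ) ≤ ((v i : ℕ) : ℝ) := by
        have : (v i : ℕ) ≠ 0 := fun h0 => hi (Fin.ext h0)
        exact_mod_cast Nat.one_le_iff_ne_zero.mpr this
      have hge : (1:ℝ) / M ≤ |cubeCenter d n v i - a i| := by
        rw [hav, abs_of_nonneg (by positivity), div_le_div_iff₀ hM0 hM0]
        nlinarith [hv1, hM0]
      have tri : |cubeCenter d n v i - a i| ≤ |cubeCenter d n v i - x i| + |x i - a i| :=
        abs_sub_le _ _ _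
      have hcomm : |cubeCenter d n v i - x i| = |x i - cubeCenter d n v i| := abs_sub_comm _ _
      have hsum2 : 1 / (2 * M) + 1 / (2 * M) = 1 / M := by
        rw [← add_div, div_eq_div_iff (by positivity) hM0.ne']
        ring
      rw [hcomm] at tri
      linarith [h6, h7, hge, tri, hsum2]
    rw [hgv, mul_zero]
  have hzero : ∀ x ∉ U, g (M • (x - a)) = 0 := by
    intro x hx
    by_contra hgx
    exact hx (fun i => hsupp v0 x hgx i)
  have hIU : IntegrableOn (fun x : Evec d => c v0 * L * P * g (M • (x - a))) U := by
    exact (h2.integrableOn).congr_fun (fun x hx => hmcnU x hx) hUopen.measurableSet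
  have hIterm : Integrable (fun x : Evec d => c v0 * L * P * g (M • (x - a))) := by
    rw [← integrable_indicator_iff hUopen.measurableSet] at hIU
    refine hIU.congr (Filter.Eventually.of_forall fun x => ?_)
    by_cases hx : x ∈ U
    · simp [Set.indicator_of_mem hx]
    · simp [Set.indicator_of_notMem hx, hzero x hx]
  have hCne : (c v0 * L * P) ≠ 0 := by
    have : c v0 ≠ 0 := by rcases hc v0 with h | h <;> rw [h] <;> norm_num
    exact mul_ne_zero (mul_ne_zero this hLne) hPne
  have hgM : Integrable (fun x : Evec d => g (M • (x - a))) := by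
    have := hIterm.const_mul (c v0 * L * P)⁻¹
    refine this.congr (Filter.Eventually.of_forall fun x => ?_)
    simp only [inv_mul_cancel_left₀ hCne]
  have hgM2 : Integrable (fun x : Evec d => g (M • x)) := by
    have := hgM.comp_add_right a
    simpa [add_sub_cancel_right] using this
  exact hg ((integrable_comp_smul_iff volume g hM0.ne').mp hgM2)

set_option maxHeartbeats 1000000 in
/-- Fourier decay of the perturbation functions `m^{(c_n)}` in the
minimax lower bound, uniformly over `n` and over admissible sign vectors `c_n`. -/
theorem statement18 (d : ℕ) (hd : 0 < d) (c92 : ℝ) (hc92 : 0 < c92)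
    (g : Evec d → ℝ)
    (hgsupp : ∀ x : Evec d, g x ≠ 0 → ∀ i, x i ∈ Set.Ioo (-(1 / 2) : ℝ) (1 / 2))
    (hg2 : 0 < ∫ x : Evec d, (g x) ^ 2)
    (hgF : ∀ ω : Evec d, 2 ≤ ‖ω‖ →
      ‖fourierT d g ω‖ ≤ c92 / (‖ω‖ ^ (d + 1) * (Real.log ‖ω‖) ^ 2)) :
    ∃ c1 : ℝ, 0 < c1 ∧
      ∀ (n : ℕ) (c : (Fin d → Fin (MnD d n)) → ℝ),
        (∀ v, c v = 1 ∨ c v = -1) →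
        (∀ ω : Evec d,
          ‖∑ v : Fin d → Fin (MnD d n),
              (c v : ℂ) * Complex.exp (Complex.I * ((inner ℝ ω (cubeCenter d n v) : ℝ) : ℂ))‖
            ≤ Real.log n * (MnD d n : ℝ) ^ ((d : ℝ) / 2)) →
        ∀ ω : Evec d, 2 ≤ ‖ω‖ →
          ‖fourierT d (mcn d n g c) ω‖
            ≤ c1 / (‖ω‖ ^ (d + 1) * (Real.log ‖ω‖) ^ 2) := by
  classical
  have hK0 : (0:ℝ) < (2 * Real.pi) ^ (-(d : ℝ) / 2) :=
    Real.rpow_pos_of_pos (by positivity) _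
  set Cg : ℝ := (2 * Real.pi) ^ (-(d : ℝ) / 2) * ∫ x : Evec d, |g x| with hCgdef
  have hCg0 : 0 ≤ Cg :=
    mul_nonneg hK0.le (integral_nonneg fun x => abs_nonneg _)
  have hl2 : (0:ℝ) < Real.log 2 := Real.log_pos one_lt_two
  have hc1a : (0:ℝ) ≤ c92 * (3 / Real.log 2) ^ 2 := by positivity
  have hc1b : (0:ℝ) ≤ 9 * 2 ^ (d + 1) * Cg := by positivity
  refine ⟨c92 * (3 / Real.log 2) ^ 2 + 9 * 2 ^ (d + 1) * Cg + 1, by linarith, ?_⟩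
  intro n c hc hS ω hω
  have hω0 : (0:ℝ) < ‖ω‖ := lt_of_lt_of_le two_pos hω
  have hlogω : Real.log 2 ≤ Real.log ‖ω‖ := Real.log_le_log two_pos hω
  have hlogω0 : 0 < Real.log ‖ω‖ := lt_of_lt_of_le hl2 hlogω
  have hD : 0 < ‖ω‖ ^ (d + 1) * Real.log ‖ω‖ ^ 2 := by positivity
  have hc1nn : (0:ℝ) ≤ c92 * (3 / Real.log 2) ^ 2 + 9 * 2 ^ (d + 1) * Cg + 1 := by linarith
  by_cases hn : n < 2
  · -- n = 0 or 1 : the coefficient (log n)⁻³ vanishes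
    have hlog0 : Real.log n = 0 := by
      interval_cases n
      · simp
      · simp
    have hzero : mcn d n g c = fun _ => 0 := by
      funext x
      rw [mcn]
      apply Finset.sum_eq_zero
      intro v _
      rw [hlog0]
      norm_num
    rw [hzero]
    have hft : fourierT d (fun _ => 0) ω = 0 := by simp [fourierT]
    rw [hft, norm_zero]
    exact div_nonneg hc1nn hD.le
  push_neg at hn
  have hn1 : (1:ℝ) < (n:ℝ) := by exact_mod_cast hn
  have hlogn : 0 < Real.log n := Real.log_pos hn1
  have hl2n : Real.log 2 ≤ Real.log n := by
    apply Real.log_le_log two_pos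
    exact_mod_cast hn
  have hepos : 0 < (1:ℝ) / (2 * pexp d + d) := by rw [pexp]; positivity
  have hn0 : (0:ℝ) < (n:ℝ) := by linarith
  have hrpos : (0:ℝ) < (n:ℝ) ^ ((1:ℝ) / (2 * pexp d + d)) := Real.rpow_pos_of_pos hn0 _
  have hMpos : 0 < MnD d n := Nat.one_le_ceil_iff.mpr hrpos
  have hM0 : (0:ℝ) < (MnD d n : ℝ) := by exact_mod_cast hMpos
  have hM1 : (1:ℝ) ≤ (MnD d n : ℝ) := by exact_mod_cast hMpos
  set M : ℝ := (MnD d n : ℝ) with hMdef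
  have hx1 : (1:ℝ) ≤ (n:ℝ) ^ ((1:ℝ) / (2 * pexp d + d)) :=
    Real.one_le_rpow hn1.le hepos.le
  have hMle : M ≤ 2 * (n:ℝ) ^ ((1:ℝ) / (2 * pexp d + d)) := by
    rw [hMdef, MnD]
    have h2 := Nat.ceil_lt_add_one hrpos.le
    linarith
  have hlogM : Real.log M ≤ 2 * Real.log n := by
    have h1 : Real.log M ≤ Real.log (2 * (n:ℝ) ^ ((1:ℝ) / (2 * pexp d + d))) :=
      Real.log_le_log hM0 hMle
    rw [Real.log_mul two_ne_zero (ne_of_gt hrpos), Real.log_rpow hn0] at h1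
    have he1 : (1:ℝ) / (2 * pexp d + d) ≤ 1 := by
      rw [pexp, div_le_one (by positivity)]
      have : (0:ℝ) ≤ (d:ℝ) := Nat.cast_nonneg d
      linarith
    nlinarith [hl2n, hlogn, he1, hlogn.le]
  by_cases hInt : Integrable g (volume : Measure (Evec d))
  swap
  · have hni := mcn_not_integrable d n hd hn hMpos g hgsupp hInt c hc ω
    rw [fourierT, integral_undef hni, mul_zero, norm_zero]
    exact div_nonneg hc1nn hD.le
  -- main case : g integrable
  rw [fourier_mcn d n hM0 g hInt c ω, norm_mul, norm_mul, Complex.norm_real, Real.norm_eq_abs]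
  have hL0 : (0:ℝ) ≤ ((Real.log n) ^ 3)⁻¹ := inv_nonneg.2 (by positivity)
  have hX0 : (0:ℝ) ≤ ((Real.log n) ^ 3)⁻¹ * (M ^ pexp d)⁻¹ * (M ^ d)⁻¹ :=
    mul_nonneg (mul_nonneg hL0 (by positivity)) (by positivity)
  rw [abs_of_nonneg hX0]
  have hSb : ‖(∑ v : Fin d → Fin (MnD d n), (c v : ℂ) *
      Complex.exp (-(Complex.I * ((inner ℝ ω (cubeCenter d n v) : ℝ) : ℂ))))‖ ≤
      Real.log n * M ^ ((d : ℝ) / 2) := by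
    have h := hS (-ω)
    simp only [inner_neg_left, Complex.ofReal_neg, mul_neg] at h
    exact h
  have hcomb : ((Real.log n) ^ 3)⁻¹ * (M ^ pexp d)⁻¹ * (M ^ d)⁻¹ *
      (Real.log n * M ^ ((d : ℝ) / 2)) =
      ((Real.log n) ^ 2)⁻¹ * (M ^ (d + 1))⁻¹ := by
    have e1 : (M ^ pexp d)⁻¹ * (M ^ d)⁻¹ * M ^ ((d : ℝ) / 2) = (M ^ (d + 1))⁻¹ := by
      have e1a : (M ^ pexp d)⁻¹ * (M ^ d)⁻¹ * M ^ ((d : ℝ) / 2)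
          = M ^ (-(pexp d)) * M ^ (-(d : ℝ)) * M ^ ((d : ℝ) / 2) := by
        rw [Real.rpow_neg hM0.le, Real.rpow_neg hM0.le, Real.rpow_natCast]
      rw [e1a, ← Real.rpow_add hM0, ← Real.rpow_add hM0,
        show -(pexp d) + -(d : ℝ) + (d : ℝ) / 2 = -((d : ℝ) + 1) by rw [pexp]; ring,
        Real.rpow_neg hM0.le,
        show ((d : ℝ) + 1) = ((d + 1 : ℕ) : ℝ) by push_cast; ring,
        Real.rpow_natCast]
    have e2 : ((Real.log n) ^ 3)⁻¹ * Real.log n = ((Real.log n) ^ 2)⁻¹ := by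
      field_simp
    calc ((Real.log n) ^ 3)⁻¹ * (M ^ pexp d)⁻¹ * (M ^ d)⁻¹ *
        (Real.log n * M ^ ((d : ℝ) / 2))
        = (((Real.log n) ^ 3)⁻¹ * Real.log n) *
          ((M ^ pexp d)⁻¹ * (M ^ d)⁻¹ * M ^ ((d : ℝ) / 2)) := by ring
      _ = _ := by rw [e1, e2]
  have hA0 : (0:ℝ) < (Real.log n) ^ 2 := pow_pos hlogn 2
  have hB0 : (0:ℝ) < M ^ (d + 1) := pow_pos hM0 _
  have step1 : ((Real.log n) ^ 3)⁻¹ * (M ^ pexp d)⁻¹ * (M ^ d)⁻¹ *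
      ‖(∑ v : Fin d → Fin (MnD d n), (c v : ℂ) *
        Complex.exp (-(Complex.I * ((inner ℝ ω (cubeCenter d n v) : ℝ) : ℂ))))‖ *
      ‖(fourierT d g (M⁻¹ • ω))‖ ≤
      ((Real.log n) ^ 2)⁻¹ * (M ^ (d + 1))⁻¹ *
        ‖(fourierT d g (M⁻¹ • ω))‖ := by
    rw [← hcomb]
    exact mul_le_mul_of_nonneg_right (mul_le_mul_of_nonneg_left hSb hX0)
      (norm_nonneg _)
  refine le_trans step1 ?_
  by_cases hfar : 2 * M ≤ ‖ω‖
  · -- far regime : use the decay of F̂_g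
    set u : ℝ := M⁻¹ * ‖ω‖ with hu
    have hu2 : (2:ℝ) ≤ u := by
      rw [hu, le_inv_mul_iff₀ hM0]
      linarith
    have hu0 : (0:ℝ) < u := lt_of_lt_of_le two_pos hu2
    have hnrm : ‖M⁻¹ • ω‖ = u := by
      rw [norm_smul, Real.norm_eq_abs, abs_of_pos (inv_pos.2 hM0), hu]
    have hF : ‖(fourierT d g (M⁻¹ • ω))‖ ≤
        c92 / (u ^ (d + 1) * (Real.log u) ^ 2) := by
      have h := hgF (M⁻¹ • ω) (by rw [hnrm]; exact hu2)
      rwa [hnrm] at h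
    have hlogu : Real.log 2 ≤ Real.log u := Real.log_le_log two_pos hu2
    have hlogu0 : 0 < Real.log u := lt_of_lt_of_le hl2 hlogu
    have hωeq : ‖ω‖ = M * u := by rw [hu]; field_simp
    have hlogsplit : Real.log ‖ω‖ = Real.log M + Real.log u := by
      rw [hωeq, Real.log_mul hM0.ne' hu0.ne']
    have h8 : Real.log ‖ω‖ ≤ 3 / Real.log 2 * (Real.log n * Real.log u) := by
      rw [div_mul_eq_mul_div, le_div_iff₀ hl2, hlogsplit]
      have k1 : Real.log M * Real.log 2 ≤ 2 * (Real.log n * Real.log u) := by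
        calc Real.log M * Real.log 2 ≤ (2 * Real.log n) * Real.log 2 :=
              mul_le_mul_of_nonneg_right hlogM hl2.le
          _ = 2 * (Real.log n * Real.log 2) := by ring
          _ ≤ 2 * (Real.log n * Real.log u) := by
              have := mul_le_mul_of_nonneg_left hlogu hlogn.le
              linarith
      have k2 : Real.log u * Real.log 2 ≤ Real.log n * Real.log u := by
        calc Real.log u * Real.log 2 = Real.log 2 * Real.log u := by ring
          _ ≤ Real.log n * Real.log u := mul_le_mul_of_nonneg_right hl2n hlogu0.le
      nlinarith [k1, k2]
    have h9 : (Real.log ‖ω‖) ^ 2 ≤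
        (3 / Real.log 2) ^ 2 * ((Real.log n) ^ 2 * (Real.log u) ^ 2) := by
      calc (Real.log ‖ω‖) ^ 2
          ≤ (3 / Real.log 2 * (Real.log n * Real.log u)) ^ 2 :=
            pow_le_pow_left₀ hlogω0.le h8 2
        _ = (3 / Real.log 2) ^ 2 * ((Real.log n) ^ 2 * (Real.log u) ^ 2) := by ring
    have hY0 : (0:ℝ) < u ^ (d + 1) * (Real.log u) ^ 2 :=
      mul_pos (pow_pos hu0 _) (pow_pos hlogu0 2)
    have hsplit : ‖ω‖ ^ (d + 1) = M ^ (d + 1) * u ^ (d + 1) := by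
      rw [← mul_pow, ← hωeq]
    calc ((Real.log n) ^ 2)⁻¹ * (M ^ (d + 1))⁻¹ * ‖(fourierT d g (M⁻¹ • ω))‖
        ≤ ((Real.log n) ^ 2)⁻¹ * (M ^ (d + 1))⁻¹ *
          (c92 / (u ^ (d + 1) * (Real.log u) ^ 2)) :=
          mul_le_mul_of_nonneg_left hF (by positivity)
      _ = c92 / ((Real.log n) ^ 2 * M ^ (d + 1) * (u ^ (d + 1) * (Real.log u) ^ 2)) := by
          rw [div_eq_mul_inv, div_eq_mul_inv, mul_inv, mul_inv]
          ring
      _ ≤ (c92 * (3 / Real.log 2) ^ 2 + 9 * 2 ^ (d + 1) * Cg + 1) /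
          (‖ω‖ ^ (d + 1) * Real.log ‖ω‖ ^ 2) := by
          rw [div_le_div_iff₀ (mul_pos (mul_pos hA0 hB0) hY0) hD]
          calc c92 * (‖ω‖ ^ (d + 1) * Real.log ‖ω‖ ^ 2)
              = (c92 * Real.log ‖ω‖ ^ 2) * (M ^ (d + 1) * u ^ (d + 1)) := by
                rw [hsplit]; ring
            _ ≤ ((c92 * (3 / Real.log 2) ^ 2) *
                ((Real.log n) ^ 2 * (Real.log u) ^ 2)) * (M ^ (d + 1) * u ^ (d + 1)) := by
                refine mul_le_mul_of_nonneg_right ?_ (by positivity)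
                calc c92 * Real.log ‖ω‖ ^ 2
                    ≤ c92 * ((3 / Real.log 2) ^ 2 * ((Real.log n) ^ 2 * (Real.log u) ^ 2)) :=
                      mul_le_mul_of_nonneg_left h9 hc92.le
                  _ = (c92 * (3 / Real.log 2) ^ 2) *
                      ((Real.log n) ^ 2 * (Real.log u) ^ 2) := by ring
            _ = (c92 * (3 / Real.log 2) ^ 2) *
                ((Real.log n) ^ 2 * M ^ (d + 1) * (u ^ (d + 1) * (Real.log u) ^ 2)) := by
                ring
            _ ≤ (c92 * (3 / Real.log 2) ^ 2 + 9 * 2 ^ (d + 1) * Cg + 1) *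
                ((Real.log n) ^ 2 * M ^ (d + 1) * (u ^ (d + 1) * (Real.log u) ^ 2)) := by
                refine mul_le_mul_of_nonneg_right (by linarith)
                  (mul_pos (mul_pos hA0 hB0) hY0).le
  · -- near regime : crude bound on F̂_g
    push_neg at hfar
    have hF : ‖(fourierT d g (M⁻¹ • ω))‖ ≤ Cg := by
      rw [hCgdef]
      exact fourier_abs_le d g _
    have hω1 : ‖ω‖ ^ (d + 1) ≤ 2 ^ (d + 1) * M ^ (d + 1) := by
      rw [← mul_pow]
      exact pow_le_pow_left₀ (norm_nonneg ω) hfar.le (d + 1)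
    have hlog2M : Real.log ‖ω‖ ≤ 3 * Real.log n := by
      have h := Real.log_le_log hω0 hfar.le
      rw [Real.log_mul two_ne_zero hM0.ne'] at h
      linarith
    have hsq : Real.log ‖ω‖ ^ 2 ≤ 9 * (Real.log n) ^ 2 := by
      nlinarith [hlogω0.le, hlog2M, hlogn]
    calc ((Real.log n) ^ 2)⁻¹ * (M ^ (d + 1))⁻¹ * ‖(fourierT d g (M⁻¹ • ω))‖
        ≤ ((Real.log n) ^ 2)⁻¹ * (M ^ (d + 1))⁻¹ * Cg :=
          mul_le_mul_of_nonneg_left hF (by positivity)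
      _ = Cg / ((Real.log n) ^ 2 * M ^ (d + 1)) := by
          rw [div_eq_mul_inv, mul_inv]
          ring
      _ ≤ (c92 * (3 / Real.log 2) ^ 2 + 9 * 2 ^ (d + 1) * Cg + 1) /
          (‖ω‖ ^ (d + 1) * Real.log ‖ω‖ ^ 2) := by
          rw [div_le_div_iff₀ (mul_pos hA0 hB0) hD]
          calc Cg * (‖ω‖ ^ (d + 1) * Real.log ‖ω‖ ^ 2)
              ≤ Cg * ((2 ^ (d + 1) * M ^ (d + 1)) * (9 * (Real.log n) ^ 2)) := by
                refine mul_le_mul_of_nonneg_left ?_ hCg0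
                exact mul_le_mul hω1 hsq (by positivity) (by positivity)
            _ = (9 * 2 ^ (d + 1) * Cg) * ((Real.log n) ^ 2 * M ^ (d + 1)) := by ring
            _ ≤ (c92 * (3 / Real.log 2) ^ 2 + 9 * 2 ^ (d + 1) * Cg + 1) *
                ((Real.log n) ^ 2 * M ^ (d + 1)) := by
                refine mul_le_mul_of_nonneg_right (by linarith) (mul_pos hA0 hB0).le


end
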